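/- For a hyperelastic material with constitutive functions P_rad(x,y) = x³y² ∂_y W(x,y) and P_tan(x,y) = (1/2)x³y(x ∂_x W(x,y) − y ∂_y W(x,y)) derived from a C³ stored energy W, satisfying P_rad(x,1) = P_tan(x,1) for all x > 0, one has x ∂_x P_rad(x,1) + 2Θ(x,1) = 3 ∂_y P_rad(x,1) for all x > 0, where Θ(x,y) = (P_tan(x,y) − P_rad(x,y))/(1−y) and Θ(x,1) = ∂_y P_rad(x,1) − ∂_y P_tan(x,1). -/

import Mathlib

open Set

/-- Constitutive function P_rad(x,y) = x³ y² ∂_y W(x,y). -/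
noncomputable def PradE (W : ℝ → ℝ → ℝ) (x y : ℝ) : ℝ :=
  x ^ 3 * y ^ 2 * deriv (fun t => W x t) y

/-- Constitutive function P_tan(x,y) = (1/2) x³ y (x ∂_x W − y ∂_y W). -/
noncomputable def PtanE (W : ℝ → ℝ → ℝ) (x y : ℝ) : ℝ :=
  (1 / 2) * x ^ 3 * y *
    (x * deriv (fun s => W s y) x - y * deriv (fun t => W x t) y)

/-- Derivative along the vertical slice. -/
lemma hasDerivAt_slice2 {F : ℝ × ℝ → ℝ} {x y : ℝ} (hF : DifferentiableAt ℝ F (x, y)) :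
    HasDerivAt (fun t => F (x, t)) (fderiv ℝ F (x, y) (0, 1)) y :=
  hF.hasFDerivAt.comp_hasDerivAt y ((hasDerivAt_const y x).prodMk (hasDerivAt_id y))

/-- Derivative along the horizontal slice. -/
lemma hasDerivAt_slice1 {F : ℝ × ℝ → ℝ} {x y : ℝ} (hF : DifferentiableAt ℝ F (x, y)) :
    HasDerivAt (fun s => F (s, y)) (fderiv ℝ F (x, y) (1, 0)) x :=
  hF.hasFDerivAt.comp_hasDerivAt x ((hasDerivAt_id x).prodMk (hasDerivAt_const x y))

lemma fderiv_apply_const {Φ : ℝ × ℝ → (ℝ × ℝ) →L[ℝ] ℝ} {p : ℝ × ℝ}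
    (hΦ : DifferentiableAt ℝ Φ p) (v w : ℝ × ℝ) :
    fderiv ℝ (fun q => Φ q v) p w = fderiv ℝ Φ p w v := by
  have h := (hΦ.hasFDerivAt.clm_apply (hasFDerivAt_const v p)).fderiv
  rw [h]
  simp

/-- For hyperelastic materials with equal pressures on the line y = 1,
    x ∂_x P_rad(x,1) + 2Θ(x,1) = 3 ∂_y P_rad(x,1), where
    Θ(x,1) = ∂_y P_rad(x,1) − ∂_y P_tan(x,1). -/
theorem hyperelastic_center_identity
    (W : ℝ → ℝ → ℝ)
    (hW : ContDiffOn ℝ 3 (fun p : ℝ × ℝ => W p.1 p.2) (Ioi 0 ×ˢ Ioi 0))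
    (hiso : ∀ x > (0 : ℝ), PradE W x 1 = PtanE W x 1) :
    ∀ x > (0 : ℝ),
      x * deriv (fun s => PradE W s 1) x
        + 2 * (deriv (fun t => PradE W x t) 1 - deriv (fun t => PtanE W x t) 1)
      = 3 * deriv (fun t => PradE W x t) 1 := by
  intro x hx
  set S : Set (ℝ × ℝ) := Ioi 0 ×ˢ Ioi 0 with hSdef
  have hSopen : IsOpen S := isOpen_Ioi.prod isOpen_Ioi
  set F : ℝ × ℝ → ℝ := fun p => W p.1 p.2 with hFdef
  have hmemS : ∀ {a b : ℝ}, 0 < a → 0 < b → (a, b) ∈ S := by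
    intro a b ha hb; exact ⟨ha, hb⟩
  have hFdiff : ∀ {q : ℝ × ℝ}, q ∈ S → DifferentiableAt ℝ F q := by
    intro q hq
    exact (hW.contDiffAt (hSopen.mem_nhds hq)).differentiableAt (by norm_num)
  set g1 : ℝ × ℝ → ℝ := fun q => fderiv ℝ F q (1, 0) with hg1def
  set g2 : ℝ × ℝ → ℝ := fun q => fderiv ℝ F q (0, 1) with hg2def
  -- partial derivatives of W
  have hderiv2 : ∀ {a b : ℝ}, 0 < a → 0 < b → deriv (fun t => W a t) b = g2 (a, b) := by
    intro a b ha hb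
    exact (hasDerivAt_slice2 (hFdiff (hmemS ha hb))).deriv
  have hderiv1 : ∀ {a b : ℝ}, 0 < a → 0 < b → deriv (fun s => W s b) a = g1 (a, b) := by
    intro a b ha hb
    exact (hasDerivAt_slice1 (hFdiff (hmemS ha hb))).deriv
  -- smoothness of the first partial derivatives
  have hfd : ContDiffOn ℝ 2 (fderiv ℝ F) S :=
    hW.fderiv_of_isOpen hSopen (by norm_num)
  have hg1cd : ContDiffOn ℝ 2 g1 S := hfd.clm_apply contDiffOn_const
  have hg2cd : ContDiffOn ℝ 2 g2 S := hfd.clm_apply contDiffOn_const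
  have hp0 : ((x, (1 : ℝ)) : ℝ × ℝ) ∈ S := hmemS hx one_pos
  have hg1diff : DifferentiableAt ℝ g1 (x, 1) :=
    (hg1cd.differentiableOn (by norm_num)).differentiableAt (hSopen.mem_nhds hp0)
  have hg2diff : ∀ {q : ℝ × ℝ}, q ∈ S → DifferentiableAt ℝ g2 q := by
    intro q hq
    exact (hg2cd.differentiableOn (by norm_num)).differentiableAt (hSopen.mem_nhds hq)
  -- abbreviations
  set A : ℝ := g2 (x, 1) with hA
  set B : ℝ := g1 (x, 1) with hB
  set c21 : ℝ := fderiv ℝ g2 (x, 1) (1, 0) with hc21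
  set c22 : ℝ := fderiv ℝ g2 (x, 1) (0, 1) with hc22
  set c12 : ℝ := fderiv ℝ g1 (x, 1) (0, 1) with hc12
  -- Clairaut
  have hΦdiff : DifferentiableAt ℝ (fderiv ℝ F) (x, 1) :=
    (hfd.differentiableOn (by norm_num)).differentiableAt (hSopen.mem_nhds hp0)
  have hsymm : c21 = c12 := by
    have hs : IsSymmSndFDerivAt ℝ F (x, 1) :=
      (hW.contDiffAt (hSopen.mem_nhds hp0)).isSymmSndFDerivAt (by norm_num)
    rw [hc21, hc12, hg1def, hg2def, fderiv_apply_const hΦdiff, fderiv_apply_const hΦdiff]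
    exact hs.eq _ _
  -- values of Prad, Ptan on S
  have hPrad : ∀ {a b : ℝ}, 0 < a → 0 < b →
      PradE W a b = a ^ 3 * b ^ 2 * g2 (a, b) := by
    intro a b ha hb
    rw [PradE, hderiv2 ha hb]
  have hPtan : ∀ {a b : ℝ}, 0 < a → 0 < b →
      PtanE W a b = (1 / 2) * a ^ 3 * b * (a * g1 (a, b) - b * g2 (a, b)) := by
    intro a b ha hb
    rw [PtanE, hderiv1 ha hb, hderiv2 ha hb]
  -- isotropy relation at (x,1)
  have hxB : x * B = 3 * A := by
    have h := hiso x hx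
    rw [hPrad hx one_pos, hPtan hx one_pos] at h
    have hx3 : x ^ 3 ≠ 0 := pow_ne_zero _ (ne_of_gt hx)
    rw [← hA, ← hB] at h
    nlinarith [h, sq_nonneg x, pow_pos hx 3]
  -- derivative of g2 along the slices
  have hg2vert : HasDerivAt (fun t => g2 (x, t)) c22 1 := hasDerivAt_slice2 (hg2diff hp0)
  have hg2horiz : HasDerivAt (fun s => g2 (s, 1)) c21 x := hasDerivAt_slice1 (hg2diff hp0)
  have hg1vert : HasDerivAt (fun t => g1 (x, t)) c12 1 := hasDerivAt_slice2 hg1diff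
  -- ∂_y Prad (x,1)
  have hd1 : deriv (fun t => PradE W x t) 1 = x ^ 3 * (2 * A + c22) := by
    have hEq : (fun t => PradE W x t) =ᶠ[nhds 1] fun t => x ^ 3 * (t ^ 2 * g2 (x, t)) := by
      filter_upwards [isOpen_Ioi.mem_nhds (mem_Ioi.mpr one_pos)] with t ht
      rw [hPrad hx ht]; ring
    rw [hEq.deriv_eq]
    have h : HasDerivAt (fun t => x ^ 3 * (t ^ 2 * g2 (x, t)))
        (x ^ 3 * ((2 * 1 ^ 1) * g2 (x, 1) + 1 ^ 2 * c22)) 1 :=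
      ((hasDerivAt_pow 2 1).mul hg2vert).const_mul (x ^ 3)
    rw [h.deriv, ← hA]; ring
  -- ∂_x Prad (x,1)
  have hd2 : deriv (fun s => PradE W s 1) x = 3 * x ^ 2 * A + x ^ 3 * c21 := by
    have hEq : (fun s => PradE W s 1) =ᶠ[nhds x] fun s => s ^ 3 * g2 (s, 1) := by
      filter_upwards [isOpen_Ioi.mem_nhds (mem_Ioi.mpr hx)] with s hs
      rw [hPrad hs one_pos]; ring
    rw [hEq.deriv_eq]
    have h : HasDerivAt (fun s => s ^ 3 * g2 (s, 1))
        ((3 * x ^ 2) * g2 (x, 1) + x ^ 3 * c21) x :=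
      (hasDerivAt_pow 3 x).mul hg2horiz
    rw [h.deriv, ← hA]
  -- ∂_y Ptan (x,1)
  have hd3 : deriv (fun t => PtanE W x t) 1
      = (1 / 2) * x ^ 3 * ((x * B - A) + (x * c12 - A - c22)) := by
    have hEq : (fun t => PtanE W x t) =ᶠ[nhds 1]
        fun t => (1 / 2) * x ^ 3 * (t * (x * g1 (x, t) - t * g2 (x, t))) := by
      filter_upwards [isOpen_Ioi.mem_nhds (mem_Ioi.mpr one_pos)] with t ht
      rw [hPtan hx ht]; ring
    rw [hEq.deriv_eq]
    have hinner : HasDerivAt (fun t => x * g1 (x, t) - t * g2 (x, t))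
        (x * c12 - (1 * g2 (x, 1) + 1 * c22)) 1 :=
      (hg1vert.const_mul x).sub ((hasDerivAt_id 1).mul hg2vert)
    have h : HasDerivAt (fun t => (1 / 2) * x ^ 3 * (t * (x * g1 (x, t) - t * g2 (x, t))))
        ((1 / 2) * x ^ 3 * (1 * (x * g1 (x, 1) - 1 * g2 (x, 1))
          + 1 * (x * c12 - (1 * g2 (x, 1) + 1 * c22)))) 1 :=
      ((hasDerivAt_id 1).mul hinner).const_mul ((1 / 2) * x ^ 3)
    rw [h.deriv, ← hA, ← hB]; ring
  rw [hd1, hd2, hd3, hsymm]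
  linear_combination (-(x ^ 3)) * hxB
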